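/- Let m ≥ 3. Then for all α ∈ ℤ^{2^m}, all a,b ∈ {1,…,m} and all r,s ∈ {1,2}: u_{Σ_{ar}}(α Σ_{ar}) · u_{Σ_{ar}}(α) = 1, and u_{Σ_{ar}}(α Σ_{bs}) · u_{Σ_{bs}}(α) = u_{Σ_{bs}}(α Σ_{ar}) · u_{Σ_{ar}}(α). (These identities are exactly what makes the lifted automorphisms ẑ, Σ̂_{ar} of the twisted group algebra of BW(m) satisfy the defining relations of the extraspecial group E(m) = 2_+^{2m+1}, so that the lifted group Ê(m) is isomorphic to E(m).) -/

import Mathlib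

open Matrix

/-- `bwBit i a` is the `a`-th binary digit of `i`. -/
def bwBit (i a : ℕ) : ℕ := i / 2 ^ a % 2

/-- `bwPar m i` is the number of zero digits in the length-`m` binary expansion of `i`, mod 2. -/
def bwPar (m i : ℕ) : ℕ := ((Finset.range m).filter fun a => bwBit i a = 0).card % 2

/-- The exponent of `√2` in the `(i,j)` entry of the Gram matrix of `BW(m)`. -/
def bwExp (m i j : ℕ) : ℤ :=
  (bwPar m i : ℤ) + (bwPar m j : ℤ) - 2 * (((m + 1) / 2 : ℕ) : ℤ) +
    ∑ l ∈ Finset.range m,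
      (2 * (bwBit i l : ℤ) * (bwBit j l : ℤ) - (bwBit i l : ℤ) - (bwBit j l : ℤ) + 2)

/-- The Gram matrix of the Barnes-Wall lattice `BW(m)`:
`G i j = (w_i, w_j) = √2 ^ (p i + p j - 2⌈m/2⌉ + ∑ (2 i[l] j[l] - i[l] - j[l] + 2))`. -/
noncomputable def bwGram (m : ℕ) : Matrix (Fin (2 ^ m)) (Fin (2 ^ m)) ℝ :=
  Matrix.of fun i j => Real.sqrt 2 ^ bwExp m (i : ℕ) (j : ℕ)

/-- The matrix of the lattice automorphism `Σ_{ar}` of `BW(m)` in the basis `w_i`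
(acting on row vectors from the right); `r = 1` gives `Σ_{a1}`, any other `r` gives `Σ_{a2}`. -/
def bwSigma (m a r : ℕ) : Matrix (Fin (2 ^ m)) (Fin (2 ^ m)) ℤ :=
  Matrix.of fun i j =>
    if r = 1 then
      if bwBit (i : ℕ) (m - a) = 0 then
        (if j = i then -1 else 0) +
          (if (j : ℕ) = (i : ℕ) + 2 ^ (m - a) then 2 ^ bwPar m (i : ℕ) else 0)
      else if j = i then 1 else 0
    else
      if bwBit (i : ℕ) (m - a) = 1 then
        (if j = i then -1 else 0) +
          (if (j : ℕ) + 2 ^ (m - a) = (i : ℕ) then 2 ^ bwPar m (i : ℕ) else 0)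
      else if j = i then 1 else 0

/-- `A_{ar} = Σ_{ar} - I`. -/
def bwA (m a r : ℕ) : Matrix (Fin (2 ^ m)) (Fin (2 ^ m)) ℤ := bwSigma m a r - 1

/-- The half-Gram matrix `H` of `BW(m)`: `H i j = G i j` for `i > j`, `G i i / 2` on the
diagonal, and `0` above the diagonal. -/
noncomputable def bwH (m : ℕ) : Matrix (Fin (2 ^ m)) (Fin (2 ^ m)) ℝ :=
  Matrix.of fun i j =>
    if j < i then Real.sqrt 2 ^ bwExp m (i : ℕ) (j : ℕ)
    else if i = j then Real.sqrt 2 ^ (bwExp m (i : ℕ) (i : ℕ) - 2)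
    else 0

/-- The matrix `H - Σ H Σᵀ` underlying the bilinear form `B_Σ`. -/
noncomputable def bwBMat (m : ℕ) (S : Matrix (Fin (2 ^ m)) (Fin (2 ^ m)) ℤ) :
    Matrix (Fin (2 ^ m)) (Fin (2 ^ m)) ℝ :=
  bwH m - S.map (Int.cast : ℤ → ℝ) * bwH m * (S.map (Int.cast : ℤ → ℝ))ᵀ

/-- The bilinear form `B_Σ(α, β) = ∑_{i > j} α_i β_j (H - Σ H Σᵀ)_{ij}`. -/
noncomputable def bwBQuad (m : ℕ) (S : Matrix (Fin (2 ^ m)) (Fin (2 ^ m)) ℤ)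
    (α β : Fin (2 ^ m) → ℤ) : ℝ :=
  ∑ i, ∑ j, if j < i then (α i : ℝ) * (β j : ℝ) * bwBMat m S i j else 0

/-- `u_Σ(α) = (-1)^{B_Σ(α,α)}`, rendered as `cos (π B_Σ(α,α))`, which agrees with
`(-1)^k` whenever `B_Σ(α,α)` is the integer `k`. -/
noncomputable def bwU (m : ℕ) (S : Matrix (Fin (2 ^ m)) (Fin (2 ^ m)) ℤ)
    (α : Fin (2 ^ m) → ℤ) : ℝ :=
  Real.cos (Real.pi * bwBQuad m S α α)

/-! ### Auxiliary development -/

section BWAux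

open Finset

/-! #### Bit lemmas -/

lemma bwBit_le_one (x t : ℕ) : bwBit x t ≤ 1 := by
  have : x / 2 ^ t % 2 < 2 := Nat.mod_lt _ (by norm_num)
  unfold bwBit; omega

lemma bwBit_eq_mod (x t : ℕ) : bwBit x t = x % 2 ^ (t + 1) / 2 ^ t := by
  unfold bwBit
  rw [pow_succ, Nat.mod_mul_right_div_self]

lemma bwBit_zero_iff (x t : ℕ) : bwBit x t = 0 ↔ x % 2 ^ (t + 1) < 2 ^ t := by
  rw [bwBit_eq_mod]
  rw [Nat.div_eq_zero_iff_lt (by positivity)]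

lemma bwBit_mod_lt (x t : ℕ) : x % 2 ^ (t + 1) < 2 ^ (t + 1) :=
  Nat.mod_lt _ ((by positivity))

lemma mod_add_pow (x t : ℕ) (h : bwBit x t = 0) :
    (x + 2 ^ t) % 2 ^ (t + 1) = x % 2 ^ (t + 1) + 2 ^ t := by
  rw [bwBit_zero_iff] at h
  have h2 : x % 2 ^ (t + 1) + 2 ^ t < 2 ^ (t + 1) := by
    have : (2:ℕ) ^ (t+1) = 2 ^ t * 2 := by rw [pow_succ]
    omega
  conv_lhs => rw [Nat.add_mod, Nat.mod_eq_of_lt (show (2:ℕ)^t < 2^(t+1) by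
    rw [pow_succ]; have : 0 < 2 ^ t := by positivity
    omega)]
  exact Nat.mod_eq_of_lt h2

lemma div_add_pow (x t : ℕ) (h : bwBit x t = 0) :
    (x + 2 ^ t) / 2 ^ (t + 1) = x / 2 ^ (t + 1) := by
  rw [bwBit_zero_iff] at h
  have hd := Nat.div_add_mod x (2 ^ (t + 1))
  have h2 : x % 2 ^ (t + 1) + 2 ^ t < 2 ^ (t + 1) := by
    have : (2:ℕ) ^ (t+1) = 2 ^ t * 2 := by rw [pow_succ]
    omega
  calc (x + 2 ^ t) / 2 ^ (t + 1)
      = (2 ^ (t+1) * (x / 2 ^ (t+1)) + (x % 2 ^ (t+1) + 2 ^ t)) / 2 ^ (t + 1) := by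
        congr 1; omega
    _ = x / 2 ^ (t + 1) + (x % 2 ^ (t+1) + 2 ^ t) / 2 ^ (t+1) := by
        rw [Nat.mul_add_div ((by positivity))]
    _ = x / 2 ^ (t + 1) := by
        rw [Nat.div_eq_of_lt h2, add_zero]

lemma bwBit_add_pow_self (x t : ℕ) (h : bwBit x t = 0) : bwBit (x + 2 ^ t) t = 1 := by
  rw [bwBit_eq_mod, mod_add_pow x t h]
  rw [bwBit_zero_iff] at h
  rw [Nat.add_div_right _ ((by positivity)), Nat.div_eq_of_lt h]

lemma bwBit_add_pow_self' (x t : ℕ) (h : bwBit x t = 1) : bwBit (x + 2 ^ t) t = 0 := by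
  have h1 : 2 ^ t ≤ x % 2 ^ (t + 1) := by
    by_contra h'
    rw [bwBit_eq_mod, Nat.div_eq_of_lt (by omega)] at h
    omega
  have hlt := bwBit_mod_lt x t
  have hp : (2:ℕ) ^ (t+1) = 2 ^ t * 2 := by rw [pow_succ]
  rw [bwBit_zero_iff]
  have : (x + 2 ^ t) % 2 ^ (t + 1) = x % 2 ^ (t + 1) + 2 ^ t - 2 ^ (t+1) := by
    conv_lhs => rw [Nat.add_mod]
    rw [Nat.mod_eq_of_lt (show (2:ℕ)^t < 2^(t+1) by omega)]
    rw [Nat.mod_eq_sub_mod (by omega), Nat.mod_eq_of_lt (by omega)]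
  omega

lemma bwBit_add_pow_lt (x t l : ℕ) (h : l < t) : bwBit (x + 2 ^ t) l = bwBit x l := by
  rw [bwBit_eq_mod, bwBit_eq_mod]
  congr 1
  have : (2:ℕ) ^ t = 2 ^ (l + 1) * 2 ^ (t - l - 1) := by
    rw [← pow_add]; congr 1; omega
  rw [this, Nat.add_mul_mod_self_left]

lemma bwBit_add_pow_gt (x t l : ℕ) (h0 : bwBit x t = 0) (h : t < l) :
    bwBit (x + 2 ^ t) l = bwBit x l := by
  unfold bwBit
  have hl : (2:ℕ) ^ l = 2 ^ (t + 1) * 2 ^ (l - t - 1) := by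
    rw [← pow_add]; congr 1; omega
  rw [hl, ← Nat.div_div_eq_div_mul, ← Nat.div_div_eq_div_mul, div_add_pow x t h0]

/-! #### Parity lemmas -/

lemma bwPar_le_one (m x : ℕ) : bwPar m x ≤ 1 := by
  have : _ % 2 < 2 := Nat.mod_lt (((Finset.range m).filter fun a => bwBit x a = 0).card)
    (by norm_num)
  unfold bwPar; omega

lemma bwPar_add_pow (m x t : ℕ) (ht : t < m) (h : bwBit x t = 0) :
    bwPar m (x + 2 ^ t) + bwPar m x = 1 := by
  have hset : (Finset.range m).filter (fun l => bwBit (x + 2 ^ t) l = 0)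
      = ((Finset.range m).filter (fun l => bwBit x l = 0)).erase t := by
    ext l
    simp only [Finset.mem_erase, Finset.mem_filter, Finset.mem_range]
    constructor
    · rintro ⟨hl, hb⟩
      rcases lt_trichotomy l t with hlt | heq | hgt
      · rw [bwBit_add_pow_lt x t l hlt] at hb; exact ⟨by omega, hl, hb⟩
      · rw [heq] at hb; rw [bwBit_add_pow_self x t h] at hb; omega
      · rw [bwBit_add_pow_gt x t l h hgt] at hb; exact ⟨by omega, hl, hb⟩
    · rintro ⟨hne, hl, hb⟩
      refine ⟨hl, ?_⟩
      rcases lt_trichotomy l t with hlt | heq | hgt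
      · rw [bwBit_add_pow_lt x t l hlt]; exact hb
      · omega
      · rw [bwBit_add_pow_gt x t l h hgt]; exact hb
  have hmem : t ∈ (Finset.range m).filter (fun l => bwBit x l = 0) := by
    simp [Finset.mem_filter, Finset.mem_range, ht, h]
  have hcard : ((Finset.range m).filter (fun l => bwBit (x + 2 ^ t) l = 0)).card
      = ((Finset.range m).filter (fun l => bwBit x l = 0)).card - 1 := by
    rw [hset, Finset.card_erase_of_mem hmem]
  have hpos : 1 ≤ ((Finset.range m).filter (fun l => bwBit x l = 0)).card :=
    Finset.card_pos.mpr ⟨t, hmem⟩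
  unfold bwPar
  omega

lemma bwPar_count (m x : ℕ) :
    ((Finset.range m).filter fun l => bwBit x l = 0).card
      + ∑ l ∈ Finset.range m, bwBit x l = m := by
  have h1 : ∑ l ∈ Finset.range m, bwBit x l
      = ∑ l ∈ Finset.range m, (if bwBit x l = 0 then 0 else 1) := by
    refine Finset.sum_congr rfl fun l _ => ?_
    have := bwBit_le_one x l
    split_ifs with h <;> omega
  rw [h1, Finset.sum_ite, Finset.sum_const, Finset.sum_const]
  simp only [smul_eq_mul, mul_zero, mul_one, zero_add]
  rw [Finset.card_filter_add_card_filter_not (p := fun l => bwBit x l = 0)]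
  · exact Finset.card_range m

/-! #### Exponent lemmas -/

lemma bwExp_even (m x y : ℕ) : bwExp m x y % 2 = 0 := by
  unfold bwExp
  have hsum : ∑ l ∈ Finset.range m,
      (2 * (bwBit x l : ℤ) * (bwBit y l : ℤ) - (bwBit x l : ℤ) - (bwBit y l : ℤ) + 2)
      = 2 * (∑ l ∈ Finset.range m, (bwBit x l : ℤ) * (bwBit y l : ℤ))
        - (∑ l ∈ Finset.range m, (bwBit x l : ℤ))
        - (∑ l ∈ Finset.range m, (bwBit y l : ℤ)) + 2 * m := by
    have e : ∀ l ∈ Finset.range m,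
        2 * (bwBit x l : ℤ) * (bwBit y l : ℤ) - (bwBit x l : ℤ) - (bwBit y l : ℤ) + 2
          = 2 * ((bwBit x l : ℤ) * (bwBit y l : ℤ)) - (bwBit x l : ℤ) - (bwBit y l : ℤ) + 2 :=
      fun l _ => by ring
    rw [Finset.sum_congr rfl e, Finset.sum_add_distrib, Finset.sum_sub_distrib,
      Finset.sum_sub_distrib, Finset.sum_const, Finset.card_range, ← Finset.mul_sum]
    push_cast
    ring
  rw [hsum]
  have hx := bwPar_count m x
  have hy := bwPar_count m y
  have hx' : (bwPar m x : ℤ)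
      = (((Finset.range m).filter fun l => bwBit x l = 0).card : ℤ) % 2 := by
    unfold bwPar; push_cast; ring
  have hy' : (bwPar m y : ℤ)
      = (((Finset.range m).filter fun l => bwBit y l = 0).card : ℤ) % 2 := by
    unfold bwPar; push_cast; ring
  have hxc : (((Finset.range m).filter fun l => bwBit x l = 0).card : ℤ)
      + ∑ l ∈ Finset.range m, (bwBit x l : ℤ) = m := by exact_mod_cast congrArg (Nat.cast : ℕ → ℤ) hx
  have hyc : (((Finset.range m).filter fun l => bwBit y l = 0).card : ℤ)
      + ∑ l ∈ Finset.range m, (bwBit y l : ℤ) = m := by exact_mod_cast congrArg (Nat.cast : ℕ → ℤ) hy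
  omega

lemma bwExp_ge (m x y : ℕ) :
    (bwPar m x : ℤ) + (bwPar m y : ℤ) + m - 2 * (((m + 1) / 2 : ℕ) : ℤ) ≤ bwExp m x y := by
  unfold bwExp
  have hterm : ∀ l ∈ Finset.range m, (1 : ℤ) ≤
      2 * (bwBit x l : ℤ) * (bwBit y l : ℤ) - (bwBit x l : ℤ) - (bwBit y l : ℤ) + 2 := by
    intro l _
    have h1 := bwBit_le_one x l
    have h2 := bwBit_le_one y l
    interval_cases h : (bwBit x l) <;> interval_cases h' : (bwBit y l) <;> norm_num
  have hsum : (m : ℤ) ≤ ∑ l ∈ Finset.range m,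
      (2 * (bwBit x l : ℤ) * (bwBit y l : ℤ) - (bwBit x l : ℤ) - (bwBit y l : ℤ) + 2) := by
    calc (m : ℤ) = ∑ _l ∈ Finset.range m, (1 : ℤ) := by simp
      _ ≤ _ := Finset.sum_le_sum hterm
  linarith

lemma bwExp_diag (m x : ℕ) :
    bwExp m x x = 2 * (bwPar m x : ℤ) + 2 * m - 2 * (((m + 1) / 2 : ℕ) : ℤ) := by
  unfold bwExp
  have hsum : ∑ l ∈ Finset.range m,
      (2 * (bwBit x l : ℤ) * (bwBit x l : ℤ) - (bwBit x l : ℤ) - (bwBit x l : ℤ) + 2)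
      = 2 * m := by
    have : ∀ l ∈ Finset.range m,
        2 * (bwBit x l : ℤ) * (bwBit x l : ℤ) - (bwBit x l : ℤ) - (bwBit x l : ℤ) + 2
          = 2 := by
      intro l _
      have h1 := bwBit_le_one x l
      interval_cases h : (bwBit x l) <;> norm_num
    rw [Finset.sum_congr rfl this, Finset.sum_const]
    simp [mul_comm]
  rw [hsum]; ring

lemma bwExp_nonneg (m x y : ℕ) : 0 ≤ bwExp m x y := by
  have hge := bwExp_ge m x y
  have hev := bwExp_even m x y
  have h : 2 * ((m + 1) / 2) ≤ m + 1 := by omega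
  have h' : (2 : ℤ) * (((m + 1) / 2 : ℕ) : ℤ) ≤ (m : ℤ) + 1 := by exact_mod_cast h
  omega

/-! #### The integer half-Gram matrix -/

def bwHZ (m : ℕ) : Matrix (Fin (2 ^ m)) (Fin (2 ^ m)) ℤ :=
  Matrix.of fun i j =>
    if j < i then 2 ^ ((bwExp m (i : ℕ) (j : ℕ)).toNat / 2)
    else if i = j then 2 ^ (((bwExp m (i : ℕ) (i : ℕ)).toNat - 2) / 2)
    else 0

lemma sqrt_two_zpow (k : ℕ) : Real.sqrt 2 ^ ((2 * k : ℕ) : ℤ) = (((2 : ℤ) ^ k : ℤ) : ℝ) := by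
  rw [zpow_natCast, pow_mul, Real.sq_sqrt (by norm_num : (0:ℝ) ≤ 2)]
  push_cast
  ring

lemma bwH_eq (m : ℕ) (hm : 3 ≤ m) : bwH m = (bwHZ m).map (Int.cast : ℤ → ℝ) := by
  ext i j
  simp only [bwH, bwHZ, Matrix.map_apply, Matrix.of_apply]
  split_ifs with h1 h2
  · have hev := bwExp_even m (i : ℕ) (j : ℕ)
    have hnn := bwExp_nonneg m (i : ℕ) (j : ℕ)
    have he : bwExp m (i : ℕ) (j : ℕ) = ((2 * ((bwExp m (i : ℕ) (j : ℕ)).toNat / 2) : ℕ) : ℤ) := by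
      push_cast; omega
    conv_lhs => rw [he]
    rw [sqrt_two_zpow]
  · have hev := bwExp_even m (i : ℕ) (i : ℕ)
    have hd := bwExp_diag m (i : ℕ)
    have h2m : 2 * ((m + 1) / 2) ≤ m + 1 := by omega
    have h2m' : (2 : ℤ) * (((m + 1) / 2 : ℕ) : ℤ) ≤ (m : ℤ) + 1 := by exact_mod_cast h2m
    have hge2 : 2 ≤ bwExp m (i : ℕ) (i : ℕ) := by
      have : (3 : ℤ) ≤ m := by exact_mod_cast hm
      omega
    have he : bwExp m (i : ℕ) (i : ℕ) - 2
        = ((2 * (((bwExp m (i : ℕ) (i : ℕ)).toNat - 2) / 2) : ℕ) : ℤ) := by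
      push_cast; omega
    conv_lhs => rw [he]
    rw [sqrt_two_zpow]
  · simp

/-- Key fact about `H`: entries whose row and column both have parity `1` are even. -/
lemma bwHZ_even (m : ℕ) (hm : 3 ≤ m) (x y : Fin (2 ^ m))
    (hx : bwPar m (x : ℕ) = 1) (hy : bwPar m (y : ℕ) = 1) : 2 ∣ bwHZ m x y := by
  have h2m : 2 * ((m + 1) / 2) ≤ m + 1 := by omega
  have h2m' : (2 : ℤ) * (((m + 1) / 2 : ℕ) : ℤ) ≤ (m : ℤ) + 1 := by exact_mod_cast h2m
  have hm' : (3 : ℤ) ≤ m := by exact_mod_cast hm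
  simp only [bwHZ, Matrix.of_apply]
  split_ifs with h1 h2
  · have hge := bwExp_ge m (x : ℕ) (y : ℕ)
    rw [hx, hy] at hge
    have hnn := bwExp_nonneg m (x : ℕ) (y : ℕ)
    have hev := bwExp_even m (x : ℕ) (y : ℕ)
    have h4 : 1 ≤ (bwExp m (x : ℕ) (y : ℕ)).toNat / 2 := by omega
    exact dvd_pow_self 2 (by omega)
  · have hd := bwExp_diag m (x : ℕ)
    rw [hx] at hd
    have h4 : 1 ≤ ((bwExp m (x : ℕ) (x : ℕ)).toNat - 2) / 2 := by omega
    exact dvd_pow_self 2 (by omega)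
  · exact dvd_zero 2

/-- Key fact about `Σ - 1`: odd entries occur only at positions `(x, k)` with
`p(x) = 0` and `p(k) = 1`. -/
lemma bwSigma_odd (m a r : ℕ) (hm : 3 ≤ m) (ha : 1 ≤ a) (x k : Fin (2 ^ m))
    (h : ¬ (2 : ℤ) ∣ (bwSigma m a r - 1) x k) :
    bwPar m (k : ℕ) = 1 ∧ bwPar m (x : ℕ) = 0 := by
  have ht : m - a < m := by omega
  have hpow : 0 < 2 ^ (m - a) := (by positivity)
  have hpx := bwPar_le_one m (x : ℕ)
  simp only [Matrix.sub_apply, bwSigma, Matrix.of_apply, Matrix.one_apply] at h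
  by_cases hr1 : r = 1
  · rw [if_pos hr1] at h
    by_cases hbit : bwBit (x : ℕ) (m - a) = 0
    · rw [if_pos hbit] at h
      by_cases hkx : k = x
      · exfalso; apply h
        subst hkx
        rw [if_pos rfl, if_pos rfl,
          if_neg (by omega : ¬ ((k : ℕ) = (k : ℕ) + 2 ^ (m - a)))]
        norm_num
      · rw [if_neg hkx, if_neg (fun hh : x = k => hkx hh.symm), sub_zero, zero_add] at h
        by_cases hk2 : (k : ℕ) = (x : ℕ) + 2 ^ (m - a)
        · rw [if_pos hk2] at h
          have hp0 : bwPar m (x : ℕ) = 0 := by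
            by_contra hp1
            exact h (by rw [(by omega : bwPar m (x : ℕ) = 1)]; norm_num)
          have hpar := bwPar_add_pow m (x : ℕ) (m - a) ht hbit
          exact ⟨by rw [hk2]; omega, hp0⟩
        · rw [if_neg hk2] at h; exact absurd (dvd_zero 2) h
    · rw [if_neg hbit] at h
      exfalso; apply h
      by_cases hkx : k = x
      · subst hkx; rw [if_pos rfl]; norm_num
      · rw [if_neg hkx, if_neg (fun hh : x = k => hkx hh.symm)]; norm_num
  · rw [if_neg hr1] at h
    by_cases hbit : bwBit (x : ℕ) (m - a) = 1
    · rw [if_pos hbit] at h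
      by_cases hkx : k = x
      · exfalso; apply h
        subst hkx
        rw [if_pos rfl, if_pos rfl,
          if_neg (by omega : ¬ ((k : ℕ) + 2 ^ (m - a) = (k : ℕ)))]
        norm_num
      · rw [if_neg hkx, if_neg (fun hh : x = k => hkx hh.symm), sub_zero, zero_add] at h
        by_cases hk2 : (k : ℕ) + 2 ^ (m - a) = (x : ℕ)
        · rw [if_pos hk2] at h
          have hp0 : bwPar m (x : ℕ) = 0 := by
            by_contra hp1
            exact h (by rw [(by omega : bwPar m (x : ℕ) = 1)]; norm_num)
          have hbk : bwBit (k : ℕ) (m - a) = 0 := by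
            have hle := bwBit_le_one (k : ℕ) (m - a)
            by_contra hb
            have h1 := bwBit_add_pow_self' (k : ℕ) (m - a) (by omega)
            rw [hk2] at h1
            omega
          have hpar := bwPar_add_pow m (k : ℕ) (m - a) ht hbk
          rw [hk2] at hpar
          exact ⟨by omega, hp0⟩
        · rw [if_neg hk2] at h; exact absurd (dvd_zero 2) h
    · rw [if_neg hbit] at h
      exfalso; apply h
      by_cases hkx : k = x
      · subst hkx; rw [if_pos rfl]; norm_num
      · rw [if_neg hkx, if_neg (fun hh : x = k => hkx hh.symm)]; norm_num

/-! #### The integer matrices `M` and `L` -/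

def bwMZ (m : ℕ) (S : Matrix (Fin (2 ^ m)) (Fin (2 ^ m)) ℤ) :
    Matrix (Fin (2 ^ m)) (Fin (2 ^ m)) ℤ :=
  bwHZ m - S * bwHZ m * Sᵀ

def bwLZ (m : ℕ) (S : Matrix (Fin (2 ^ m)) (Fin (2 ^ m)) ℤ) :
    Matrix (Fin (2 ^ m)) (Fin (2 ^ m)) ℤ :=
  Matrix.of fun i j => if j < i then bwMZ m S i j else 0

lemma bwMZ_decomp (m : ℕ) (S : Matrix (Fin (2 ^ m)) (Fin (2 ^ m)) ℤ) :
    bwMZ m S = -((S - 1) * bwHZ m * (S - 1)ᵀ + (S - 1) * bwHZ m + bwHZ m * (S - 1)ᵀ) := by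
  unfold bwMZ
  simp only [Matrix.transpose_sub, Matrix.transpose_one]
  noncomm_ring

lemma bwMZ_even (m a r : ℕ) (hm : 3 ≤ m) (ha : 1 ≤ a) (u v : Fin (2 ^ m))
    (huv : bwPar m (u : ℕ) = 1 ∨ bwPar m (v : ℕ) = 1) :
    2 ∣ bwMZ m (bwSigma m a r) u v := by
  set S := bwSigma m a r with hS
  set A := S - 1 with hA
  set H := bwHZ m with hH
  rw [bwMZ_decomp]
  simp only [Matrix.neg_apply, Matrix.add_apply]
  rw [dvd_neg]
  refine dvd_add (dvd_add ?_ ?_) ?_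
  · -- A * H * Aᵀ is always even
    rw [Matrix.mul_apply]
    refine Finset.dvd_sum fun l _ => ?_
    by_cases hAl : 2 ∣ A v l
    · exact Dvd.dvd.mul_left (by rw [Matrix.transpose_apply]; exact hAl) _
    · obtain ⟨hpl, _⟩ := bwSigma_odd m a r hm ha v l hAl
      refine Dvd.dvd.mul_right ?_ _
      rw [Matrix.mul_apply]
      refine Finset.dvd_sum fun k _ => ?_
      by_cases hAk : 2 ∣ A u k
      · exact Dvd.dvd.mul_right hAk _
      · obtain ⟨hpk, _⟩ := bwSigma_odd m a r hm ha u k hAk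
        exact Dvd.dvd.mul_left (bwHZ_even m hm k l hpk hpl) _
  · -- A * H
    rw [Matrix.mul_apply]
    refine Finset.dvd_sum fun k _ => ?_
    by_cases hAk : 2 ∣ A u k
    · exact Dvd.dvd.mul_right hAk _
    · obtain ⟨hpk, hpu⟩ := bwSigma_odd m a r hm ha u k hAk
      have hpv : bwPar m (v : ℕ) = 1 := by omega
      exact Dvd.dvd.mul_left (bwHZ_even m hm k v hpk hpv) _
  · -- H * Aᵀ
    rw [Matrix.mul_apply]
    refine Finset.dvd_sum fun k _ => ?_
    by_cases hAk : 2 ∣ A v k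
    · exact Dvd.dvd.mul_left (by rw [Matrix.transpose_apply]; exact hAk) _
    · obtain ⟨hpk, hpv⟩ := bwSigma_odd m a r hm ha v k hAk
      have hpu : bwPar m (u : ℕ) = 1 := by omega
      exact Dvd.dvd.mul_right (bwHZ_even m hm u k hpu hpk) _

lemma bwLZ_even (m a r : ℕ) (hm : 3 ≤ m) (ha : 1 ≤ a) (u v : Fin (2 ^ m))
    (huv : bwPar m (u : ℕ) = 1 ∨ bwPar m (v : ℕ) = 1) :
    2 ∣ bwLZ m (bwSigma m a r) u v := by
  simp only [bwLZ, Matrix.of_apply]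
  split_ifs with h
  · exact bwMZ_even m a r hm ha u v huv
  · exact dvd_zero 2

/-- The conjugation fact: `S L_T Sᵀ ≡ L_T (mod 2)` entrywise. -/
lemma bwConj_even (m a r b s : ℕ) (hm : 3 ≤ m) (ha : 1 ≤ a) (hb : 1 ≤ b)
    (x y : Fin (2 ^ m)) :
    2 ∣ (bwSigma m a r * bwLZ m (bwSigma m b s) * (bwSigma m a r)ᵀ
        - bwLZ m (bwSigma m b s)) x y := by
  set S := bwSigma m a r with hS
  set L := bwLZ m (bwSigma m b s) with hL
  set A := S - 1 with hA
  have hdecomp : S * L * Sᵀ - L = A * L * Aᵀ + A * L + L * Aᵀ := by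
    rw [hA]
    simp only [Matrix.transpose_sub, Matrix.transpose_one]
    noncomm_ring
  rw [hdecomp]
  simp only [Matrix.add_apply]
  have hAL : ∀ (p q : Fin (2 ^ m)), 2 ∣ (A * L) p q := by
    intro p q
    rw [Matrix.mul_apply]
    refine Finset.dvd_sum fun k _ => ?_
    by_cases hAk : 2 ∣ A p k
    · exact Dvd.dvd.mul_right hAk _
    · obtain ⟨hpk, _⟩ := bwSigma_odd m a r hm ha p k hAk
      exact Dvd.dvd.mul_left (bwLZ_even m b s hm hb k q (Or.inl hpk)) _
  refine dvd_add (dvd_add ?_ (hAL x y)) ?_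
  · rw [Matrix.mul_apply]
    exact Finset.dvd_sum fun l _ => Dvd.dvd.mul_right (hAL x l) _
  · rw [Matrix.mul_apply]
    refine Finset.dvd_sum fun k _ => ?_
    by_cases hAk : 2 ∣ A y k
    · exact Dvd.dvd.mul_left (by rw [Matrix.transpose_apply]; exact hAk) _
    · obtain ⟨hpk, _⟩ := bwSigma_odd m a r hm ha y k hAk
      exact Dvd.dvd.mul_right (bwLZ_even m b s hm hb x k (Or.inr hpk)) _

/-! #### The integer quadratic form -/

def bwQuadZ {m : ℕ} (K : Matrix (Fin (2 ^ m)) (Fin (2 ^ m)) ℤ) (α : Fin (2 ^ m) → ℤ) : ℤ :=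
  ∑ i, ∑ j, α i * α j * K i j

lemma bwQuadZ_eq_dot {m : ℕ} (K : Matrix (Fin (2 ^ m)) (Fin (2 ^ m)) ℤ)
    (α : Fin (2 ^ m) → ℤ) : bwQuadZ K α = Matrix.vecMul α K ⬝ᵥ α := by
  unfold bwQuadZ dotProduct Matrix.vecMul
  rw [Finset.sum_comm]
  refine Finset.sum_congr rfl fun j _ => ?_
  simp only [dotProduct, Finset.sum_mul]
  refine Finset.sum_congr rfl fun i _ => ?_
  ring

lemma bwQuadZ_vecMul {m : ℕ} (K S : Matrix (Fin (2 ^ m)) (Fin (2 ^ m)) ℤ)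
    (α : Fin (2 ^ m) → ℤ) :
    bwQuadZ K (Matrix.vecMul α S) = bwQuadZ (S * K * Sᵀ) α := by
  rw [bwQuadZ_eq_dot, bwQuadZ_eq_dot]
  rw [Matrix.vecMul_vecMul]
  rw [← Matrix.mulVec_transpose S α, Matrix.dotProduct_mulVec, Matrix.vecMul_vecMul]


lemma bwQuadZ_add {m : ℕ} (K K' : Matrix (Fin (2 ^ m)) (Fin (2 ^ m)) ℤ)
    (α : Fin (2 ^ m) → ℤ) : bwQuadZ (K + K') α = bwQuadZ K α + bwQuadZ K' α := by
  unfold bwQuadZ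
  rw [← Finset.sum_add_distrib]
  refine Finset.sum_congr rfl fun i _ => ?_
  rw [← Finset.sum_add_distrib]
  refine Finset.sum_congr rfl fun j _ => ?_
  simp [Matrix.add_apply]; ring

lemma bwQuadZ_even {m : ℕ} (K : Matrix (Fin (2 ^ m)) (Fin (2 ^ m)) ℤ)
    (α : Fin (2 ^ m) → ℤ) (h : ∀ i j, 2 ∣ K i j) : 2 ∣ bwQuadZ K α :=
  Finset.dvd_sum fun i _ => Finset.dvd_sum fun j _ => Dvd.dvd.mul_left (h i j) _

/-! #### Relating the real and integer quantities -/

lemma bwBMat_eq (m : ℕ) (hm : 3 ≤ m) (S : Matrix (Fin (2 ^ m)) (Fin (2 ^ m)) ℤ) :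
    bwBMat m S = (bwMZ m S).map (Int.cast : ℤ → ℝ) := by
  unfold bwBMat bwMZ
  rw [bwH_eq m hm]
  ext i j
  simp only [Matrix.map_apply, Matrix.sub_apply, Matrix.mul_apply, Matrix.transpose_apply]
  push_cast
  rfl

lemma bwBQuad_eq (m : ℕ) (hm : 3 ≤ m) (S : Matrix (Fin (2 ^ m)) (Fin (2 ^ m)) ℤ)
    (α : Fin (2 ^ m) → ℤ) :
    bwBQuad m S α α = ((bwQuadZ (bwLZ m S) α : ℤ) : ℝ) := by
  unfold bwBQuad bwQuadZ
  rw [bwBMat_eq m hm]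
  push_cast
  refine Finset.sum_congr rfl fun i _ => Finset.sum_congr rfl fun j _ => ?_
  simp only [bwLZ, Matrix.of_apply, Matrix.map_apply]
  split_ifs with h
  · push_cast; ring
  · push_cast; ring

lemma bwU_eq (m : ℕ) (hm : 3 ≤ m) (S : Matrix (Fin (2 ^ m)) (Fin (2 ^ m)) ℤ)
    (α : Fin (2 ^ m) → ℤ) :
    bwU m S α = (-1 : ℝ) ^ (bwQuadZ (bwLZ m S) α) := by
  unfold bwU
  rw [bwBQuad_eq m hm, mul_comm]
  have h := Real.cos_int_mul_pi_sub (0 : ℝ) (bwQuadZ (bwLZ m S) α)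
  rw [sub_zero, Real.cos_zero, mul_one] at h
  exact h

lemma neg_one_zpow_eq_of_even {p q : ℤ} (h : Even (p - q)) :
    (-1 : ℝ) ^ p = (-1 : ℝ) ^ q := by
  have hp : p = q + (p - q) := by ring
  rw [hp, zpow_add₀ (by norm_num : (-1 : ℝ) ≠ 0), h.neg_one_zpow, mul_one]

lemma even_of_two_dvd {n : ℤ} (h : 2 ∣ n) : Even n := by
  obtain ⟨k, rfl⟩ := h; exact even_two_mul k

end BWAux

/-- For `m ≥ 3`: `u_{Σ_{ar}}(α Σ_{ar}) u_{Σ_{ar}}(α) = 1` and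
`u_{Σ_{ar}}(α Σ_{bs}) u_{Σ_{bs}}(α) = u_{Σ_{bs}}(α Σ_{ar}) u_{Σ_{ar}}(α)`.
These identities are exactly what makes the lifted automorphisms of the twisted group algebra
of `BW(m)` satisfy the relations of the extraspecial group `E(m) = 2_+^{2m+1}`. -/
theorem bwU_extraspecial_relations (m : ℕ) (hm : 3 ≤ m) (a b r s : ℕ)
    (ha : 1 ≤ a) (ha' : a ≤ m) (hb : 1 ≤ b) (hb' : b ≤ m)
    (hr : r = 1 ∨ r = 2) (hs : s = 1 ∨ s = 2) (α : Fin (2 ^ m) → ℤ) :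
    bwU m (bwSigma m a r) (Matrix.vecMul α (bwSigma m a r)) * bwU m (bwSigma m a r) α = 1 ∧
    bwU m (bwSigma m a r) (Matrix.vecMul α (bwSigma m b s)) * bwU m (bwSigma m b s) α =
      bwU m (bwSigma m b s) (Matrix.vecMul α (bwSigma m a r)) * bwU m (bwSigma m a r) α := by
  set S := bwSigma m a r with hSdef
  set T := bwSigma m b s with hTdef
  set LS := bwLZ m S with hLSdef
  set LT := bwLZ m T with hLTdef
  have hconjSS : ∀ x y, 2 ∣ (S * LS * Sᵀ - LS) x y :=
    fun x y => bwConj_even m a r a r hm ha ha x y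
  have hconjTS : ∀ x y, 2 ∣ (T * LS * Tᵀ - LS) x y :=
    fun x y => bwConj_even m b s a r hm hb ha x y
  have hconjST : ∀ x y, 2 ∣ (S * LT * Sᵀ - LT) x y :=
    fun x y => bwConj_even m a r b s hm ha hb x y
  have hsplit : ∀ (U K : Matrix (Fin (2 ^ m)) (Fin (2 ^ m)) ℤ) (β : Fin (2 ^ m) → ℤ),
      bwQuadZ (U * K * Uᵀ) β = bwQuadZ (U * K * Uᵀ - K) β + bwQuadZ K β := by
    intro U K β
    rw [← bwQuadZ_add]
    congr 1
    simp
  constructor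
  · rw [bwU_eq m hm S _, bwU_eq m hm S α, ← zpow_add₀ (by norm_num : (-1 : ℝ) ≠ 0)]
    refine Even.neg_one_zpow ?_
    rw [bwQuadZ_vecMul, hsplit S LS α]
    have h1 : Even (bwQuadZ (S * LS * Sᵀ - LS) α) :=
      even_of_two_dvd (bwQuadZ_even _ _ hconjSS)
    have h2 : Even (bwQuadZ LS α + bwQuadZ LS α) := ⟨bwQuadZ LS α, rfl⟩
    have := h1.add h2
    refine (congrArg Even ?_).mpr this
    ring
  · rw [bwU_eq m hm S _, bwU_eq m hm T α, bwU_eq m hm T _, bwU_eq m hm S α,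
      ← zpow_add₀ (by norm_num : (-1 : ℝ) ≠ 0), ← zpow_add₀ (by norm_num : (-1 : ℝ) ≠ 0)]
    refine neg_one_zpow_eq_of_even ?_
    rw [bwQuadZ_vecMul LS T α, bwQuadZ_vecMul LT S α, hsplit T LS α, hsplit S LT α]
    have h1 : Even (bwQuadZ (T * LS * Tᵀ - LS) α) :=
      even_of_two_dvd (bwQuadZ_even _ _ hconjTS)
    have h2 : Even (bwQuadZ (S * LT * Sᵀ - LT) α) :=
      even_of_two_dvd (bwQuadZ_even _ _ hconjST)
    have := h1.sub h2
    refine (congrArg Even ?_).mpr this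
    ring
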